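/- Let Z be any real n×m matrix. Then 2·Tr(√(Zᵀ Z)) is the greatest lower bound of the set { Tr(Zᵀ S⁻¹ Z) + Tr(S) : S an n×n real positive definite matrix }; i.e., every such value is ≥ 2·Tr(√(ZᵀZ)), and values arbitrarily close to 2·Tr(√(ZᵀZ)) are attained by positive definite S (e.g. S = √(ZZᵀ + εI) for small ε > 0). -/

import Mathlib

open Matrix
open scoped MatrixOrder

lemma trace_psd_nonneg {k : ℕ} {M : Matrix (Fin k) (Fin k) ℝ} (hM : M.PosSemidef) :
    0 ≤ M.trace := by
  rw [Matrix.trace]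
  apply Finset.sum_nonneg
  intro i _
  have := hM.diag_nonneg (i := i)
  exact this

section aux
variable {n m : ℕ} (Z : Matrix (Fin n) (Fin m) ℝ)
  (V : Matrix (Fin n) (Fin n) ℝ) (μ : Fin n → ℝ)

-- basic Φ algebra
lemma phi_mul (hV1 : Vᵀ * V = 1) (g h : Fin n → ℝ) :
    (V * diagonal g * Vᵀ) * (V * diagonal h * Vᵀ)
      = V * diagonal (fun i => g i * h i) * Vᵀ := by
  simp only [Matrix.mul_assoc]
  rw [← Matrix.mul_assoc Vᵀ V, hV1, Matrix.one_mul, ← Matrix.mul_assoc (diagonal g),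
    diagonal_mul_diagonal]

lemma phi_trace (hV1 : Vᵀ * V = 1) (g : Fin n → ℝ) :
    (V * diagonal g * Vᵀ).trace = ∑ i, g i := by
  rw [trace_mul_cycle, hV1, Matrix.one_mul, trace_diagonal]

lemma phi_transpose (g : Fin n → ℝ) :
    (V * diagonal g * Vᵀ)ᵀ = V * diagonal g * Vᵀ := by
  rw [Matrix.transpose_mul, Matrix.transpose_mul, transpose_transpose, diagonal_transpose,
    Matrix.mul_assoc]

lemma phi_psd (g : Fin n → ℝ) (hg : ∀ i, 0 ≤ g i) :
    (V * diagonal g * Vᵀ).PosSemidef := by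
  have h := (Matrix.posSemidef_diagonal_iff.mpr hg).mul_mul_conjTranspose_same V
  rwa [conjTranspose_eq_transpose_of_trivial] at h

lemma phi_one (hV2 : V * Vᵀ = 1) : V * diagonal (fun _ : Fin n => (1:ℝ)) * Vᵀ = 1 := by
  rw [diagonal_one, Matrix.mul_one, hV2]


lemma row_vanish (hV1 : Vᵀ * V = 1) (hdec : Z * Zᵀ = V * diagonal μ * Vᵀ)
    (i : Fin n) (hi : μ i = 0) (j : Fin m) : (Vᵀ * Z) i j = 0 := by
  have hYY : (Vᵀ * Z) * (Vᵀ * Z)ᵀ = diagonal μ := by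
    rw [Matrix.transpose_mul, transpose_transpose]
    calc Vᵀ * Z * (Zᵀ * V) = Vᵀ * (Z * Zᵀ) * V := by
          simp only [Matrix.mul_assoc]
      _ = Vᵀ * (V * diagonal μ * Vᵀ) * V := by rw [hdec]
      _ = (Vᵀ * V) * diagonal μ * (Vᵀ * V) := by simp only [Matrix.mul_assoc]
      _ = diagonal μ := by rw [hV1, Matrix.one_mul, Matrix.mul_one]
  have hii := congrFun (congrFun hYY i) i
  rw [Matrix.mul_apply, diagonal_apply_eq] at hii
  have h0 : ∑ k, ((Vᵀ * Z) i k) ^ 2 = 0 := by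
    rw [hi] at hii
    rw [← hii]
    exact Finset.sum_congr rfl fun k _ => by rw [Matrix.transpose_apply, sq]
  have := (Finset.sum_eq_zero_iff_of_nonneg (fun k _ => sq_nonneg _)).mp h0 j (Finset.mem_univ j)
  exact pow_eq_zero_iff (by norm_num) |>.mp this

lemma proj_fix (hV1 : Vᵀ * V = 1) (hV2 : V * Vᵀ = 1) (hμ : ∀ i, 0 ≤ μ i)
    (hdec : Z * Zᵀ = V * diagonal μ * Vᵀ) :
    V * diagonal (fun i => if 0 < μ i then (1:ℝ) else 0) * Vᵀ * Z = Z := by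
  have hd : diagonal (fun i => if 0 < μ i then (1:ℝ) else 0) * (Vᵀ * Z) = Vᵀ * Z := by
    ext i j
    rw [Matrix.diagonal_mul]
    by_cases h : 0 < μ i
    · simp [h]
    · have h0 : μ i = 0 := le_antisymm (not_lt.mp h) (hμ i)
      simp [h, row_vanish Z V μ hV1 hdec i h0 j]
  calc V * diagonal (fun i => if 0 < μ i then (1:ℝ) else 0) * Vᵀ * Z
      = V * (diagonal (fun i => if 0 < μ i then (1:ℝ) else 0) * (Vᵀ * Z)) := by
        simp only [Matrix.mul_assoc]
    _ = V * (Vᵀ * Z) := by rw [hd]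
    _ = V * Vᵀ * Z := by rw [Matrix.mul_assoc]
    _ = Z := by rw [hV2, Matrix.one_mul]

/-- the pseudo-inverse-sqrt entries -/
noncomputable def pf (μ : Fin n → ℝ) (i : Fin n) : ℝ :=
  if 0 < μ i then (Real.sqrt (μ i))⁻¹ else 0

lemma pf_mul_self_mul (hμ : ∀ i, 0 ≤ μ i) (i : Fin n) :
    pf μ i * μ i * pf μ i = if 0 < μ i then (1:ℝ) else 0 := by
  by_cases h : 0 < μ i
  · have hs : Real.sqrt (μ i) ≠ 0 := ne_of_gt (Real.sqrt_pos.mpr h)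
    rw [pf, if_pos h, if_pos h, mul_comm ((Real.sqrt (μ i))⁻¹ * μ i), ← mul_assoc, ← mul_inv,
      Real.mul_self_sqrt (hμ i), inv_mul_cancel₀ (ne_of_gt h)]
  · simp [pf, h]

lemma pf_mul (hμ : ∀ i, 0 ≤ μ i) (i : Fin n) :
    pf μ i * μ i = Real.sqrt (μ i) := by
  by_cases h : 0 < μ i
  · have hs : Real.sqrt (μ i) ≠ 0 := ne_of_gt (Real.sqrt_pos.mpr h)
    rw [pf, if_pos h, inv_mul_eq_div, eq_comm, eq_div_iff hs, Real.mul_self_sqrt (hμ i)]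
  · have h0 : μ i = 0 := le_antisymm (not_lt.mp h) (hμ i)
    simp [pf, h, h0]

lemma sqrt_eq (hZ : (Zᵀ * Z).PosSemidef)
    (hV1 : Vᵀ * V = 1) (hV2 : V * Vᵀ = 1) (hμ : ∀ i, 0 ≤ μ i)
    (hdec : Z * Zᵀ = V * diagonal μ * Vᵀ) :
    CFC.sqrt (Zᵀ * Z) = Zᵀ * (V * diagonal (pf μ) * Vᵀ) * Z := by
  symm
  refine (fun (hb : (Zᵀ * (V * diagonal (pf μ) * Vᵀ) * Z).PosSemidef)
      (h : (Zᵀ * (V * diagonal (pf μ) * Vᵀ) * Z) ^ 2 = Zᵀ * Z) =>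
      (CFC.sqrt_unique (a := Zᵀ * Z) (by rw [← pow_two]; exact h) hb.nonneg).symm) ?_ ?_
  · have h := (phi_psd V (pf μ) (fun i => by unfold pf; split <;> positivity)).conjTranspose_mul_mul_same Z
    rwa [conjTranspose_eq_transpose_of_trivial] at h
  · have hC : (V * diagonal (pf μ) * Vᵀ) * (Z * Zᵀ) * (V * diagonal (pf μ) * Vᵀ)
        = V * diagonal (fun i => if 0 < μ i then (1:ℝ) else 0) * Vᵀ := by
      rw [hdec, phi_mul V hV1, phi_mul V hV1]
      have he : (fun i => pf μ i * μ i * pf μ i) = fun i => if 0 < μ i then (1:ℝ) else 0 :=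
        funext (pf_mul_self_mul μ hμ)
      rw [he]
    calc (Zᵀ * (V * diagonal (pf μ) * Vᵀ) * Z) ^ 2
        = Zᵀ * ((V * diagonal (pf μ) * Vᵀ) * (Z * Zᵀ) * (V * diagonal (pf μ) * Vᵀ)) * Z := by
          rw [pow_two]; simp only [Matrix.mul_assoc]
      _ = Zᵀ * (V * diagonal (fun i => if 0 < μ i then (1:ℝ) else 0) * Vᵀ) * Z := by rw [hC]
      _ = Zᵀ * (V * diagonal (fun i => if 0 < μ i then (1:ℝ) else 0) * Vᵀ * Z) := by
          simp only [Matrix.mul_assoc]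
      _ = Zᵀ * Z := by rw [proj_fix Z V μ hV1 hV2 hμ hdec]

lemma trace_sqrt (hZ : (Zᵀ * Z).PosSemidef)
    (hV1 : Vᵀ * V = 1) (hV2 : V * Vᵀ = 1) (hμ : ∀ i, 0 ≤ μ i)
    (hdec : Z * Zᵀ = V * diagonal μ * Vᵀ) :
    (CFC.sqrt (Zᵀ * Z)).trace = ∑ i, Real.sqrt (μ i) := by
  rw [sqrt_eq Z V μ hZ hV1 hV2 hμ hdec, trace_mul_cycle,
    Matrix.mul_assoc Z, ← Matrix.mul_assoc Z Zᵀ, hdec, phi_mul V hV1, phi_trace V hV1]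
  exact Finset.sum_congr rfl fun i _ => by rw [mul_comm, pf_mul μ hμ i]

lemma lower_bound (hZ : (Zᵀ * Z).PosSemidef)
    (hV1 : Vᵀ * V = 1) (hV2 : V * Vᵀ = 1) (hμ : ∀ i, 0 ≤ μ i)
    (hdec : Z * Zᵀ = V * diagonal μ * Vᵀ)
    (S : Matrix (Fin n) (Fin n) ℝ) (hS : S.PosDef) :
    2 * (CFC.sqrt (Zᵀ * Z)).trace ≤ (Zᵀ * S⁻¹ * Z).trace + S.trace := by
  set C := V * diagonal (pf μ) * Vᵀ with hCdef
  set W := C * Z with hWdef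
  have hCt : Cᵀ = C := phi_transpose V (pf μ)
  -- R = sqrt of S
  set R := CFC.sqrt S with hRdef
  have hRR : R * R = S := CFC.sqrt_mul_sqrt_self S hS.posSemidef.nonneg
  have hRt : Rᵀ = R := by
    have h2 := (CFC.sqrt_nonneg S).posSemidef.1.eq
    rwa [conjTranspose_eq_transpose_of_trivial] at h2
  have hRunit : IsUnit R.det := by
    have hdet : R.det * R.det = S.det := by rw [← Matrix.det_mul, hRR]
    have : S.det ≠ 0 := ne_of_gt hS.det_pos
    exact isUnit_iff_ne_zero.mpr (fun h => this (by rw [← hdet, h, mul_zero]))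
  have hRinv : R⁻¹ * R = 1 := Matrix.nonsing_inv_mul R hRunit
  have hRinv' : R * R⁻¹ = 1 := Matrix.mul_nonsing_inv R hRunit
  have hSinv : S⁻¹ = R⁻¹ * R⁻¹ := by rw [← hRR, Matrix.mul_inv_rev]
  have hRit : R⁻¹ᵀ = R⁻¹ := by rw [Matrix.transpose_nonsing_inv, hRt]
  -- expansion of the square
  set M := R⁻¹ * Z - R * W with hMdef
  have hMpsd : (Mᵀ * M).PosSemidef := by
    have := Matrix.posSemidef_conjTranspose_mul_self M
    rwa [conjTranspose_eq_transpose_of_trivial] at this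
  have h0 : 0 ≤ (Mᵀ * M).trace := trace_psd_nonneg hMpsd
  have hexp : (Mᵀ * M).trace
      = (Zᵀ * S⁻¹ * Z).trace + (Wᵀ * S * W).trace - 2 * (Wᵀ * Z).trace := by
    have : Mᵀ * M = Zᵀ * S⁻¹ * Z + Wᵀ * S * W - Zᵀ * W - Wᵀ * Z := by
      rw [hMdef, Matrix.transpose_sub, Matrix.transpose_mul, Matrix.transpose_mul, hRit, hRt]
      rw [Matrix.sub_mul, Matrix.mul_sub, Matrix.mul_sub, hSinv, ← hRR]
      calc Zᵀ * R⁻¹ * (R⁻¹ * Z) - Zᵀ * R⁻¹ * (R * W)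
            - (Wᵀ * R * (R⁻¹ * Z) - Wᵀ * R * (R * W))
          = Zᵀ * (R⁻¹ * R⁻¹) * Z - Zᵀ * (R⁻¹ * R) * W
            - Wᵀ * (R * R⁻¹) * Z + Wᵀ * (R * R) * W := by
            simp only [Matrix.mul_assoc]; abel
        _ = Zᵀ * (R⁻¹ * R⁻¹) * Z + Wᵀ * (R * R) * W - Zᵀ * W - Wᵀ * Z := by
            rw [hRinv, hRinv', Matrix.mul_one, Matrix.mul_one]; abel
    rw [this, Matrix.trace_sub, Matrix.trace_sub, Matrix.trace_add]
    have htr : (Zᵀ * W).trace = (Wᵀ * Z).trace := by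
      rw [← Matrix.trace_transpose (Zᵀ * W), Matrix.transpose_mul, transpose_transpose]
    rw [htr]; ring
  -- trace (Wᵀ S W) ≤ trace S
  have hWW : W * Wᵀ = V * diagonal (fun i => if 0 < μ i then (1:ℝ) else 0) * Vᵀ := by
    rw [hWdef, Matrix.transpose_mul, hCt]
    calc C * Z * (Zᵀ * C) = C * (Z * Zᵀ) * C := by simp only [Matrix.mul_assoc]
      _ = _ := by
        rw [hdec, hCdef, phi_mul V hV1, phi_mul V hV1]
        have he : (fun i => pf μ i * μ i * pf μ i) = fun i => if 0 < μ i then (1:ℝ) else 0 :=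
          funext (pf_mul_self_mul μ hμ)
        rw [he]
  have hWSW : (Wᵀ * S * W).trace ≤ S.trace := by
    have hq : (R * (1 - W * Wᵀ) * R).PosSemidef := by
      have hpsd : (1 - W * Wᵀ).PosSemidef := by
        have : (1 : Matrix (Fin n) (Fin n) ℝ) - W * Wᵀ
            = V * diagonal (fun i => 1 - (if 0 < μ i then (1:ℝ) else 0)) * Vᵀ := by
          rw [hWW]
          have h1 : (1 : Matrix (Fin n) (Fin n) ℝ) = V * diagonal (fun _ => (1:ℝ)) * Vᵀ :=
            (phi_one V hV2).symm
          rw [h1, ← Matrix.sub_mul, ← Matrix.mul_sub, diagonal_sub]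
        rw [this]
        exact phi_psd V _ (fun i => by by_cases h : 0 < μ i <;> simp [h])
      have := hpsd.mul_mul_conjTranspose_same R
      rwa [conjTranspose_eq_transpose_of_trivial, hRt] at this
    have htr : (R * (1 - W * Wᵀ) * R).trace = S.trace - (Wᵀ * S * W).trace := by
      have h1 : (R * R * (W * Wᵀ)).trace = (Wᵀ * S * W).trace := by
        rw [hRR, ← Matrix.mul_assoc, trace_mul_cycle S W Wᵀ]
      rw [Matrix.mul_sub, Matrix.mul_one, Matrix.sub_mul, Matrix.trace_sub,
        trace_mul_cycle R (W * Wᵀ) R, h1, hRR]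
    have := trace_psd_nonneg hq
    rw [htr] at this
    linarith
  -- trace (Wᵀ Z) = trace sqrt
  have hWZ : (Wᵀ * Z).trace = (CFC.sqrt (Zᵀ * Z)).trace := by
    rw [hWdef, Matrix.transpose_mul, hCt, sqrt_eq Z V μ hZ hV1 hV2 hμ hdec, Matrix.mul_assoc]
  linarith [hexp ▸ h0, hWSW, hWZ]

lemma upper_bound (hZ : (Zᵀ * Z).PosSemidef)
    (hV1 : Vᵀ * V = 1) (hV2 : V * Vᵀ = 1) (hμ : ∀ i, 0 ≤ μ i)
    (hdec : Z * Zᵀ = V * diagonal μ * Vᵀ) (ε : ℝ) (hε : 0 < ε) :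
    ∃ S : Matrix (Fin n) (Fin n) ℝ, S.PosDef ∧
      (Zᵀ * S⁻¹ * Z).trace + S.trace ≤ 2 * (CFC.sqrt (Zᵀ * Z)).trace + n * ε := by
  set g : Fin n → ℝ := fun i => ε + Real.sqrt (μ i) with hgdef
  have hgpos : ∀ i, 0 < g i := fun i => add_pos_of_pos_of_nonneg hε (Real.sqrt_nonneg _)
  refine ⟨V * diagonal g * Vᵀ, ?_, ?_⟩
  · have hsplit : V * diagonal g * Vᵀ
        = diagonal (fun _ : Fin n => ε) + V * diagonal (fun i => Real.sqrt (μ i)) * Vᵀ := by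
      have h1 : diagonal g = diagonal (fun _ : Fin n => ε)
          + diagonal (fun i => Real.sqrt (μ i)) := by
        rw [diagonal_add]
      have h2 : V * diagonal (fun _ : Fin n => ε) * Vᵀ = diagonal (fun _ : Fin n => ε) := by
        rw [← smul_one_eq_diagonal, mul_smul_comm, Matrix.mul_one, smul_mul_assoc, hV2]
      rw [h1, Matrix.mul_add, Matrix.add_mul, h2]
    rw [hsplit]
    exact (Matrix.posDef_diagonal_iff.mpr fun _ => hε).add_posSemidef
      (phi_psd V _ (fun i => Real.sqrt_nonneg _))
  · have hSinv : (V * diagonal g * Vᵀ)⁻¹ = V * diagonal (fun i => (g i)⁻¹) * Vᵀ := by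
      apply Matrix.inv_eq_right_inv
      rw [phi_mul V hV1]
      have he : (fun i => g i * (g i)⁻¹) = fun _ : Fin n => (1:ℝ) :=
        funext fun i => mul_inv_cancel₀ (ne_of_gt (hgpos i))
      rw [he, phi_one V hV2]
    have htr1 : (Zᵀ * (V * diagonal g * Vᵀ)⁻¹ * Z).trace = ∑ i, μ i * (g i)⁻¹ := by
      rw [hSinv, trace_mul_cycle, ← Matrix.mul_assoc, hdec,
        Matrix.mul_assoc (V * diagonal μ * Vᵀ), phi_mul V hV1, phi_trace V hV1]
    have htr2 : (V * diagonal g * Vᵀ).trace = ∑ i, g i := phi_trace V hV1 g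
    rw [htr1, htr2, trace_sqrt Z V μ hZ hV1 hV2 hμ hdec]
    have hle : ∑ i, μ i * (g i)⁻¹ ≤ ∑ i, Real.sqrt (μ i) := by
      apply Finset.sum_le_sum
      intro i _
      rw [mul_inv_le_iff₀ (hgpos i)]
      have h1 : Real.sqrt (μ i) * Real.sqrt (μ i) = μ i := Real.mul_self_sqrt (hμ i)
      have h2 : 0 ≤ Real.sqrt (μ i) := Real.sqrt_nonneg _
      show μ i ≤ Real.sqrt (μ i) * (ε + Real.sqrt (μ i))
      nlinarith
    have hsum : ∑ i, g i = n * ε + ∑ i, Real.sqrt (μ i) := by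
      rw [hgdef, Finset.sum_add_distrib, Finset.sum_const, Finset.card_univ,
        Fintype.card_fin, nsmul_eq_mul]
    rw [hsum]
    linarith

end aux

theorem nuclear_norm_variational (n m : ℕ) (Z : Matrix (Fin n) (Fin m) ℝ)
    (hZ : (Zᵀ * Z).PosSemidef) :
    IsGLB {x : ℝ | ∃ S : Matrix (Fin n) (Fin n) ℝ, S.PosDef ∧
        x = Matrix.trace (Zᵀ * S⁻¹ * Z) + Matrix.trace S}
      (2 * Matrix.trace (hZ.1.eigenvectorUnitary.1 *
        diagonal (((↑) : ℝ → ℝ) ∘ Real.sqrt ∘ hZ.1.eigenvalues) *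
        (star hZ.1.eigenvectorUnitary : Matrix (Fin m) (Fin m) ℝ))) := by
  have hT : (hZ.1.eigenvectorUnitary.1 *
        diagonal (((↑) : ℝ → ℝ) ∘ Real.sqrt ∘ hZ.1.eigenvalues) *
        (star hZ.1.eigenvectorUnitary : Matrix (Fin m) (Fin m) ℝ)) = CFC.sqrt (Zᵀ * Z) := by
    rw [CFC.sqrt_eq_real_sqrt (Zᵀ * Z) hZ.nonneg, cfcₙ_eq_cfc, hZ.1.cfc_eq, IsHermitian.cfc,
      Unitary.conjStarAlgAut_apply]
    rfl
  rw [hT]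
  have hH : (Z * Zᵀ).PosSemidef := by
    simpa [conjTranspose_eq_transpose_of_trivial] using posSemidef_self_mul_conjTranspose Z
  set V : Matrix (Fin n) (Fin n) ℝ := (hH.1.eigenvectorUnitary : Matrix (Fin n) (Fin n) ℝ) with hVdef
  set μ : Fin n → ℝ := hH.1.eigenvalues with hμdef
  have hV1 : Vᵀ * V = 1 := by
    have h := (hH.1.eigenvectorUnitary).2
    rw [Matrix.mem_unitaryGroup_iff'] at h
    rwa [Matrix.star_eq_conjTranspose, conjTranspose_eq_transpose_of_trivial] at h
  have hV2 : V * Vᵀ = 1 := by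
    have h := (hH.1.eigenvectorUnitary).2
    rw [Matrix.mem_unitaryGroup_iff] at h
    rwa [Matrix.star_eq_conjTranspose, conjTranspose_eq_transpose_of_trivial] at h
  have hμ : ∀ i, 0 ≤ μ i := hH.eigenvalues_nonneg
  have hdec : Z * Zᵀ = V * diagonal μ * Vᵀ := by
    have h := hH.1.spectral_theorem
    rw [Unitary.conjStarAlgAut_apply, Matrix.star_eq_conjTranspose,
      conjTranspose_eq_transpose_of_trivial] at h
    convert h using 3 <;> rfl
  constructor
  · rintro x ⟨S, hS, rfl⟩
    exact lower_bound Z V μ hZ hV1 hV2 hμ hdec S hS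
  · intro b hb
    apply le_of_forall_pos_le_add
    intro δ hδ
    have hεpos : 0 < δ / ((n : ℝ) + 1) := by positivity
    obtain ⟨S, hS, hle⟩ := upper_bound Z V μ hZ hV1 hV2 hμ hdec (δ / ((n : ℝ) + 1)) hεpos
    have hmem : (Zᵀ * S⁻¹ * Z).trace + S.trace ∈
        {x : ℝ | ∃ S : Matrix (Fin n) (Fin n) ℝ, S.PosDef ∧
          x = Matrix.trace (Zᵀ * S⁻¹ * Z) + Matrix.trace S} := ⟨S, hS, rfl⟩
    have hb' := hb hmem
    have hkey : (n : ℝ) * (δ / ((n : ℝ) + 1)) ≤ δ := by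
      rw [mul_div_assoc', div_le_iff₀ (by positivity : (0:ℝ) < (n:ℝ) + 1)]
      nlinarith [Nat.cast_nonneg (α := ℝ) n]
    linarith
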